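/- For all sufficiently large n, A_{n+1}/A_n >= 2 * A_n/A_{n-1}, where A_n is the number of labeled DAGs on n vertices. -/

import Mathlib

open Filter Finset

/-- A directed graph (given by its edge relation) is acyclic iff no vertex lies on a
directed cycle, i.e. the transitive closure is irreflexive. -/
def DigraphAcyclic {V : Type*} (g : V → V → Prop) : Prop :=
  ∀ a, ¬ Relation.TransGen g a a

/-- The number of labeled DAGs on `n` vertices. -/
noncomputable def dagCount (n : ℕ) : ℕ :=
  Nat.card {g : Fin n → Fin n → Bool // DigraphAcyclic fun x y => g x y = true}

/-- The number of connected labeled DAGs on `n` vertices (connected means the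
underlying undirected graph is connected). -/
noncomputable def connDagCount (n : ℕ) : ℕ :=
  Nat.card {g : Fin n → Fin n → Bool //
    (DigraphAcyclic fun x y => g x y = true) ∧
    ∀ a b : Fin n, Relation.ReflTransGen (fun x y => g x y = true ∨ g y x = true) a b}

namespace DagAux

/-- transfer of acyclicity along an equiv -/
lemma acy_conj {α β : Type*} (e : α ≃ β) (h : α → α → Bool)
    (hh : DigraphAcyclic fun x y => h x y = true) :
    DigraphAcyclic fun x y : β => h (e.symm x) (e.symm y) = true := by
  intro b hb
  exact hh (e.symm b) (Relation.TransGen.lift e.symm (fun x y hxy => hxy) _ _ hb)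

noncomputable def acySubtypeEquiv {α β : Type*} (e : α ≃ β) :
    {h : α → α → Bool // DigraphAcyclic fun x y => h x y = true} ≃
    {h : β → β → Bool // DigraphAcyclic fun x y => h x y = true} where
  toFun h := ⟨fun x y => h.1 (e.symm x) (e.symm y), acy_conj e h.1 h.2⟩
  invFun h := ⟨fun x y => h.1 (e x) (e y), by
    have := acy_conj e.symm h.1 h.2
    simpa using this⟩
  left_inv h := by ext x y; simp
  right_inv h := by ext x y; simp

lemma card_acy_congr {α β : Type*} (e : α ≃ β) :
    Nat.card {h : α → α → Bool // DigraphAcyclic fun x y => h x y = true} =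
    Nat.card {h : β → β → Bool // DigraphAcyclic fun x y => h x y = true} :=
  Nat.card_congr (acySubtypeEquiv e)


variable {n : ℕ} (T : Finset (Fin n))

def NoIn (T : Finset (Fin n)) (g : Fin n → Fin n → Bool) : Prop :=
  ∀ t ∈ T, ∀ x, g x t = false

/-- assemble a digraph from cross edges and a digraph on the complement -/
def assemble (c : {x : Fin n // x ∈ T} → {x : Fin n // x ∉ T} → Bool)
    (h : {x : Fin n // x ∉ T} → {x : Fin n // x ∉ T} → Bool) :
    Fin n → Fin n → Bool := fun x y =>
  if hy : y ∈ T then false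
  else if hx : x ∈ T then c ⟨x, hx⟩ ⟨y, hy⟩
  else h ⟨x, hx⟩ ⟨y, hy⟩

lemma assemble_edge_not_mem {c h} {x y : Fin n}
    (hxy : assemble T c h x y = true) : y ∉ T := by
  intro hy; unfold assemble at hxy; rw [dif_pos hy] at hxy; exact Bool.false_ne_true hxy

lemma assemble_acy {c h} (hh : DigraphAcyclic fun x y => h x y = true) :
    DigraphAcyclic fun x y => assemble T c h x y = true := by
  intro a ha
  -- a has an in-edge (last step of the cycle), hence a ∉ T
  have haT : a ∉ T := by
    rcases (Relation.transGen_iff _ _ _).1 ha with ⟨hsingle⟩ | ⟨b, _, hba⟩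
    · exact assemble_edge_not_mem T hsingle
    · exact assemble_edge_not_mem T hba
  -- cycles stay in the complement
  have main : ∀ x y : Fin n, Relation.TransGen (fun x y => assemble T c h x y = true) x y →
      ∀ hx : x ∉ T, ∃ hy : y ∉ T,
        Relation.TransGen (fun u v : {z : Fin n // z ∉ T} => h u v = true) ⟨x, hx⟩ ⟨y, hy⟩ := by
    intro x y hxy
    induction hxy with
    | single hxb =>
      intro hx
      have hb := assemble_edge_not_mem T hxb
      refine ⟨hb, Relation.TransGen.single ?_⟩
      unfold assemble at hxb
      rwa [dif_neg hb, dif_neg hx] at hxb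
    | tail hxb hbc ih =>
      intro hx
      obtain ⟨hb, htg⟩ := ih hx
      have hc := assemble_edge_not_mem T hbc
      refine ⟨hc, htg.tail ?_⟩
      unfold assemble at hbc
      rwa [dif_neg hc, dif_neg hb] at hbc
  obtain ⟨ha', htg⟩ := main a a ha haT
  exact hh ⟨a, haT⟩ htg

lemma acy_restrict {g : Fin n → Fin n → Bool}
    (hg : DigraphAcyclic fun x y => g x y = true) :
    DigraphAcyclic fun u v : {z : Fin n // z ∉ T} => g u v = true := by
  intro a ha
  exact hg a.1 (Relation.TransGen.lift Subtype.val (fun u v huv => huv) _ _ ha)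

noncomputable def splitEquiv :
    {g : Fin n → Fin n → Bool // (DigraphAcyclic fun x y => g x y = true) ∧ NoIn T g} ≃
    ({x : Fin n // x ∈ T} → {x : Fin n // x ∉ T} → Bool) ×
      {h : {x : Fin n // x ∉ T} → {x : Fin n // x ∉ T} → Bool //
        DigraphAcyclic fun x y => h x y = true} where
  toFun g := ⟨fun t x => g.1 t x, ⟨fun u v => g.1 u v, acy_restrict T g.2.1⟩⟩
  invFun p := ⟨assemble T p.1 p.2.1, assemble_acy T p.2.2, fun t ht x => by
    unfold assemble; rw [dif_pos ht]⟩
  left_inv g := by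
    ext x y
    by_cases hy : y ∈ T
    · simp only [assemble, dif_pos hy]
      exact (g.2.2 y hy x).symm
    · by_cases hx : x ∈ T <;> simp [assemble, hy, hx]
  right_inv p := by
    refine Prod.ext ?_ (Subtype.ext ?_)
    · funext t x
      simp [assemble, x.2, t.2]
    · funext u v
      simp [assemble, u.2, v.2]


lemma card_compl : Fintype.card {x : Fin n // x ∉ T} = n - T.card := by
  classical
  have := Fintype.card_subtype_compl (fun x : Fin n => x ∈ T)
  simp only [Fintype.card_coe, Fintype.card_fin] at this
  exact this

lemma NT_card :
    Nat.card {g : Fin n → Fin n → Bool //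
        (DigraphAcyclic fun x y => g x y = true) ∧ NoIn T g} =
      2 ^ (T.card * (n - T.card)) * dagCount (n - T.card) := by
  classical
  rw [Nat.card_congr (splitEquiv T), Nat.card_prod]
  congr 1
  · rw [Nat.card_eq_fintype_card, Fintype.card_fun, Fintype.card_fun, Fintype.card_bool,
      Fintype.card_coe, card_compl, ← pow_mul, Nat.mul_comm]
  · rw [dagCount, card_acy_congr (Fintype.equivFinOfCardEq (card_compl T))]

lemma exists_source {n : ℕ} (hn : 1 ≤ n) (g : Fin n → Fin n → Bool)
    (hg : DigraphAcyclic fun x y => g x y = true) : ∃ a, ∀ x, g x a = false := by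
  haveI : IsTrans (Fin n) (Relation.TransGen fun x y => g x y = true) :=
    ⟨fun _ _ _ => Relation.TransGen.trans⟩
  haveI : IsIrrefl (Fin n) (Relation.TransGen fun x y => g x y = true) := ⟨hg⟩
  have wf := Finite.wellFounded_of_trans_of_irrefl
    (Relation.TransGen fun x y => g x y = true)
  haveI : Nonempty (Fin n) := ⟨⟨0, hn⟩⟩
  obtain ⟨a, -, ha⟩ := wf.has_min Set.univ Set.univ_nonempty
  refine ⟨a, fun x => ?_⟩
  by_contra hx
  exact ha x trivial (Relation.TransGen.single (by simpa using hx))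

theorem key (n : ℕ) (hn : 1 ≤ n) :
    ∑ k ∈ range (n + 1),
      (-1 : ℤ) ^ k * (n.choose k) * 2 ^ (k * (n - k)) * (dagCount (n - k)) = 0 := by
  classical
  have hNT : ∀ T : Finset (Fin n),
      ((2 ^ (T.card * (n - T.card)) * dagCount (n - T.card) : ℕ) : ℤ) =
      ∑ g ∈ univ.filter (fun g : Fin n → Fin n → Bool =>
          DigraphAcyclic fun x y => g x y = true),
        (if NoIn T g then (1 : ℤ) else 0) := by
    intro T
    rw [← NT_card T, Nat.card_eq_fintype_card, Fintype.card_subtype]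
    rw [← Finset.filter_filter, Finset.card_filter]
    push_cast
    rfl
  -- step 1 : the signed sum over all subsets vanishes
  have h0 : ∑ T ∈ (univ : Finset (Fin n)).powerset,
      (-1 : ℤ) ^ T.card *
        ((2 ^ (T.card * (n - T.card)) * dagCount (n - T.card) : ℕ) : ℤ) = 0 := by
    calc ∑ T ∈ (univ : Finset (Fin n)).powerset,
        (-1 : ℤ) ^ T.card *
          ((2 ^ (T.card * (n - T.card)) * dagCount (n - T.card) : ℕ) : ℤ)
        = ∑ T ∈ (univ : Finset (Fin n)).powerset,
            ∑ g ∈ univ.filter (fun g : Fin n → Fin n → Bool =>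
                DigraphAcyclic fun x y => g x y = true),
              (-1 : ℤ) ^ T.card * (if NoIn T g then (1 : ℤ) else 0) := by
          refine Finset.sum_congr rfl fun T _ => ?_
          rw [hNT T, Finset.mul_sum]
      _ = ∑ g ∈ univ.filter (fun g : Fin n → Fin n → Bool =>
              DigraphAcyclic fun x y => g x y = true),
            ∑ T ∈ (univ : Finset (Fin n)).powerset,
              (-1 : ℤ) ^ T.card * (if NoIn T g then (1 : ℤ) else 0) :=
          Finset.sum_comm
      _ = 0 := by
          refine Finset.sum_eq_zero fun g hg => ?_
          rw [Finset.mem_filter] at hg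
          set S : Finset (Fin n) := univ.filter (fun a => ∀ x, g x a = false) with hS
          have hsub : ∀ T : Finset (Fin n), NoIn T g ↔ T ⊆ S := by
            intro T
            constructor
            · intro h t ht
              rw [hS, Finset.mem_filter]
              exact ⟨Finset.mem_univ t, h t ht⟩
            · intro h t ht x
              have := h ht
              rw [hS, Finset.mem_filter] at this
              exact this.2 x
          have hSne : S.Nonempty := by
            obtain ⟨a, ha⟩ := exists_source hn g hg.2
            exact ⟨a, by rw [hS, Finset.mem_filter]; exact ⟨Finset.mem_univ a, ha⟩⟩
          rw [← Finset.sum_subset (Finset.powerset_mono.mpr (Finset.subset_univ S))]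
          · rw [← Finset.sum_powerset_neg_one_pow_card_of_nonempty hSne]
            refine Finset.sum_congr rfl fun T hT => ?_
            rw [Finset.mem_powerset] at hT
            rw [if_pos ((hsub T).mpr hT), mul_one]
          · intro T hT hTS
            rw [Finset.mem_powerset] at hTS
            rw [if_neg (fun h => hTS ((hsub T).mp h)), mul_zero]
  -- step 2 : group by cardinality
  have h1 := Finset.sum_powerset_apply_card
    (fun k => (-1 : ℤ) ^ k * ((2 ^ (k * (n - k)) * dagCount (n - k) : ℕ) : ℤ))
    (x := (univ : Finset (Fin n)))
  rw [Finset.card_univ, Fintype.card_fin] at h1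
  rw [h1] at h0
  rw [← h0]
  refine Finset.sum_congr rfl fun k _ => ?_
  push_cast
  ring

lemma dagCount_zero : dagCount 0 = 1 := by
  rw [dagCount, Nat.card_eq_one_iff_unique]
  constructor
  · constructor
    intro g h
    ext x y
    exact absurd x.2 (by omega)
  · exact ⟨⟨fun x y => false, fun a => absurd a.2 (by omega)⟩⟩

lemma dagCount_one : dagCount 1 = 1 := by
  rw [dagCount, Nat.card_eq_one_iff_unique]
  constructor
  · constructor
    intro g h
    ext x y
    have hx : x = 0 := Subsingleton.elim _ _
    have hy : y = 0 := Subsingleton.elim _ _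
    subst hx; subst hy
    have hg : g.1 0 0 = false := by
      by_contra hc
      exact g.2 0 (Relation.TransGen.single (by simpa using hc))
    have hh : h.1 0 0 = false := by
      by_contra hc
      exact h.2 0 (Relation.TransGen.single (by simpa using hc))
    rw [hg, hh]
  · refine ⟨⟨fun x y => false, fun a ha => ?_⟩⟩
    rcases (Relation.transGen_iff _ _ _).1 ha with h | ⟨b, _, h⟩ <;>
      exact Bool.false_ne_true h

lemma choose_two_succ (m : ℕ) : (m + 1).choose 2 = m.choose 2 + m := by
  rw [Nat.choose_succ_succ, Nat.choose_one_right, Nat.add_comm]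

lemma choose_two_add (a b : ℕ) : (a + b).choose 2 = a.choose 2 + a * b + b.choose 2 := by
  induction b with
  | zero => simp
  | succ b ih =>
    have h : a + (b + 1) = (a + b) + 1 := by omega
    rw [h, choose_two_succ, ih, choose_two_succ]
    ring

noncomputable def gq (n : ℕ) : ℚ :=
  (dagCount n : ℚ) / ((n.factorial : ℚ) * 2 ^ (n.choose 2))

noncomputable def cc (k : ℕ) : ℚ := 1 / ((k.factorial : ℚ) * 2 ^ (k.choose 2))

lemma cc_pos (k : ℕ) : 0 < cc k := by
  unfold cc
  positivity

lemma gq_zero : gq 0 = 1 := by unfold gq; rw [dagCount_zero]; norm_num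

lemma gq_one : gq 1 = 1 := by unfold gq; rw [dagCount_one]; norm_num

lemma denom_pos (n : ℕ) : (0:ℚ) < (n.factorial : ℚ) * 2 ^ (n.choose 2) := by positivity

lemma gq_rec (n : ℕ) (hn : 1 ≤ n) :
    gq n = ∑ k ∈ Icc 1 n, (-1 : ℚ) ^ (k + 1) * cc k * gq (n - k) := by
  have hkey := key n hn
  -- cast to ℚ
  have hkeyQ : ∑ k ∈ range (n + 1),
      (-1 : ℚ) ^ k * (n.choose k) * 2 ^ (k * (n - k)) * (dagCount (n - k)) = 0 := by
    have := congrArg (fun z : ℤ => (z : ℚ)) hkey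
    push_cast at this
    simpa using this
  have hsplit : range (n + 1) = insert 0 (Icc 1 n) := by
    ext k
    simp only [mem_range, mem_insert, mem_Icc]
    omega
  rw [hsplit, Finset.sum_insert (by simp)] at hkeyQ
  simp only [pow_zero, Nat.choose_zero_right, Nat.cast_one, one_mul, Nat.sub_zero,
    Nat.mul_zero, Nat.zero_mul] at hkeyQ
  have hA : (dagCount n : ℚ) =
      ∑ k ∈ Icc 1 n, (-1 : ℚ) ^ (k + 1) * (n.choose k) * 2 ^ (k * (n - k)) * (dagCount (n - k)) := by
    have h2 : ∑ k ∈ Icc 1 n, (-1 : ℚ) ^ (k + 1) * (n.choose k) * 2 ^ (k * (n - k)) * (dagCount (n - k))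
        = - ∑ k ∈ Icc 1 n, (-1 : ℚ) ^ k * (n.choose k) * 2 ^ (k * (n - k)) * (dagCount (n - k)) := by
      rw [← Finset.sum_neg_distrib]
      refine Finset.sum_congr rfl fun k _ => ?_
      rw [pow_succ]
      ring
    rw [h2]
    linarith [hkeyQ]
  -- divide by the denominator
  unfold gq
  rw [hA, Finset.sum_div]
  refine Finset.sum_congr rfl fun k hk => ?_
  rw [mem_Icc] at hk
  have hkn : k ≤ n := hk.2
  have hfact : (n.factorial : ℚ) = (n.choose k) * k.factorial * (n - k).factorial := by
    have := Nat.choose_mul_factorial_mul_factorial hkn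
    exact_mod_cast congrArg (fun z : ℕ => (z : ℚ)) this.symm
  have hpow : (2:ℚ) ^ (n.choose 2) = 2 ^ (k.choose 2) * 2 ^ (k * (n - k)) * 2 ^ ((n - k).choose 2) := by
    rw [← pow_add, ← pow_add, ← choose_two_add k (n - k), Nat.add_sub_cancel' hkn]
  have hch : (0:ℚ) < (n.choose k : ℚ) := by
    exact_mod_cast Nat.choose_pos hkn
  have hf1 : ((k.factorial : ℚ)) ≠ 0 := by positivity
  have hf2 : ((n - k).factorial : ℚ) ≠ 0 := by positivity
  have hp1 : ((2:ℚ) ^ (k.choose 2)) ≠ 0 := by positivity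
  have hp2 : ((2:ℚ) ^ ((n - k).choose 2)) ≠ 0 := by positivity
  have hp3 : ((2:ℚ) ^ (k * (n - k))) ≠ 0 := by positivity
  unfold cc
  rw [hfact, hpow]
  field_simp

lemma dagCount_two : dagCount 2 = 3 := by
  have h := key 2 (by norm_num)
  rw [show (2:ℕ)+1 = 3 from rfl] at h
  rw [Finset.sum_range_succ, Finset.sum_range_succ, Finset.sum_range_succ,
    Finset.range_zero, Finset.sum_empty] at h
  norm_num [dagCount_zero, dagCount_one] at h
  omega

lemma dagCount_three : dagCount 3 = 25 := by
  have h := key 3 (by norm_num)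
  rw [show (3:ℕ)+1 = 4 from rfl] at h
  rw [Finset.sum_range_succ, Finset.sum_range_succ, Finset.sum_range_succ,
    Finset.sum_range_succ, Finset.range_zero, Finset.sum_empty] at h
  norm_num [dagCount_zero, dagCount_one, dagCount_two] at h
  omega

lemma dagCount_four : dagCount 4 = 543 := by
  have h := key 4 (by norm_num)
  rw [show (4:ℕ)+1 = 5 from rfl] at h
  rw [Finset.sum_range_succ, Finset.sum_range_succ, Finset.sum_range_succ,
    Finset.sum_range_succ, Finset.sum_range_succ, Finset.range_zero, Finset.sum_empty] at h
  norm_num [dagCount_zero, dagCount_one, dagCount_two, dagCount_three,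
    show Nat.choose 4 2 = 6 from rfl] at h
  omega

/-- the ratio sequence -/
noncomputable def rr (n : ℕ) : ℚ := gq n / gq (n - 1)

lemma gq_two : gq 2 = 3 / 4 := by
  unfold gq; rw [dagCount_two]; norm_num [Nat.factorial]

lemma gq_three : gq 3 = 25 / 48 := by
  unfold gq; rw [dagCount_three]; norm_num [Nat.factorial]

lemma gq_four : gq 4 = 181 / 512 := by
  unfold gq; rw [dagCount_four]
  norm_num [Nat.factorial, show Nat.choose 4 2 = 6 from rfl]

lemma rr_one : rr 1 = 1 := by unfold rr; rw [gq_one, gq_zero]; norm_num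
lemma rr_two : rr 2 = 3 / 4 := by unfold rr; rw [gq_two, gq_one]; norm_num
lemma rr_three : rr 3 = 25 / 36 := by unfold rr; rw [gq_three, gq_two]; norm_num
lemma rr_four : rr 4 = 543 / 800 := by unfold rr; rw [gq_four, gq_three]; norm_num

lemma cc_one : cc 1 = 1 := by unfold cc; norm_num [Nat.factorial]
lemma cc_two : cc 2 = 1/4 := by unfold cc; norm_num [Nat.factorial]
lemma cc_three : cc 3 = 1/48 := by unfold cc; norm_num [Nat.factorial]
lemma cc_four : cc 4 = 1/1536 := by
  unfold cc; norm_num [Nat.factorial, show Nat.choose 4 2 = 6 from rfl]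

lemma cc_succ (k : ℕ) : cc (k + 1) = cc k * (1 / ((k + 1) * 2 ^ k)) := by
  unfold cc
  rw [choose_two_succ, Nat.factorial_succ, pow_add]
  push_cast
  have h1 : ((k.factorial : ℚ)) ≠ 0 := by positivity
  have h2 : ((2:ℚ) ^ (k.choose 2)) ≠ 0 := by positivity
  have h3 : ((2:ℚ) ^ k) ≠ 0 := by positivity
  have h4 : ((k:ℚ) + 1) ≠ 0 := by positivity
  field_simp

lemma tailterm_le {k : ℕ} (hk : 5 ≤ k) :
    cc k * (25/16) ^ (k - 1) ≤ (1/10000) * (1/2) ^ (k - 5) := by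
  induction k, hk using Nat.le_induction with
  | base =>
    unfold cc
    norm_num [Nat.factorial, show Nat.choose 5 2 = 10 from rfl]
  | succ k hk ih =>
    have h1 : k + 1 - 1 = (k - 1) + 1 := by omega
    have h2 : k + 1 - 5 = (k - 5) + 1 := by omega
    rw [h1, h2, pow_succ, pow_succ, cc_succ]
    have hfac : (1 / (((k:ℚ) + 1) * 2 ^ k)) * (25/16) ≤ 1/2 := by
      have h2k : (32:ℚ) ≤ 2 ^ k := by
        calc (32:ℚ) = 2 ^ 5 := by norm_num
        _ ≤ 2 ^ k := by
          apply pow_le_pow_right₀ (by norm_num) hk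
      have hk1 : (6:ℚ) ≤ (k:ℚ) + 1 := by
        have : (5:ℚ) ≤ (k:ℚ) := by exact_mod_cast hk
        linarith
      have hprod : (192:ℚ) ≤ ((k:ℚ) + 1) * 2 ^ k := by nlinarith
      rw [div_mul_eq_mul_div, one_mul, div_le_iff₀ (by linarith)]
      linarith
    have hccpos := cc_pos k
    have hrpos : (0:ℚ) < (25/16) ^ (k - 1) := by positivity
    calc cc k * (1 / (((k:ℚ) + 1) * 2 ^ k)) * ((25/16) ^ (k-1) * (25/16))
        = (cc k * (25/16) ^ (k-1)) * ((1 / (((k:ℚ) + 1) * 2 ^ k)) * (25/16)) := by ring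
      _ ≤ ((1/10000) * (1/2) ^ (k - 5)) * (1/2) := by
          apply mul_le_mul ih hfac (by positivity) (by positivity)
      _ = 1/10000 * ((1/2) ^ (k-5) * (1/2)) := by ring

lemma tail_sum_aux {n : ℕ} (hn : 4 ≤ n) :
    ∑ k ∈ Finset.Icc 5 n, cc k * (25/16) ^ (k - 1) ≤ 1/5000 - (1/5000) * (1/2) ^ (n - 4) := by
  induction n, hn using Nat.le_induction with
  | base => simp
  | succ n hn ih =>
    have hins : Finset.Icc 5 (n + 1) = insert (n + 1) (Finset.Icc 5 n) := by
      ext k; simp only [Finset.mem_Icc, Finset.mem_insert]; omega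
    rw [hins, Finset.sum_insert (by simp [Finset.mem_Icc])]
    have hterm := tailterm_le (k := n + 1) (by omega)
    have h1 : n + 1 - 5 = n - 4 := by omega
    have h2 : n + 1 - 4 = (n - 4) + 1 := by omega
    rw [h1] at hterm
    rw [h2, pow_succ]
    linarith

noncomputable def rho (n k : ℕ) : ℚ := gq (n - k) / gq (n - 1)

lemma rho_one {n : ℕ} (h : 0 < gq (n - 1)) : rho n 1 = 1 := by
  unfold rho; exact div_self (ne_of_gt h)

lemma rho_succ {n k : ℕ} (hk : 1 ≤ k) (hkn : k + 1 ≤ n)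
    (hx : gq (n - (k + 1)) ≠ 0) (hy : gq (n - k) ≠ 0) (hz : gq (n - 1) ≠ 0) :
    rho n (k + 1) = rho n k / rr (n - k) := by
  unfold rho rr
  have h1 : n - k - 1 = n - (k + 1) := by omega
  rw [h1]
  field_simp

/-- expression of the ratio via the recurrence -/
lemma rr_expr {n : ℕ} (hn : 1 ≤ n) (h : gq (n - 1) ≠ 0) :
    rr n = ∑ k ∈ Finset.Icc 1 n, (-1 : ℚ) ^ (k + 1) * cc k * rho n k := by
  unfold rr
  rw [gq_rec n hn, Finset.sum_div]
  refine Finset.sum_congr rfl fun k _ => ?_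
  unfold rho
  rw [mul_div_assoc]

theorem L1 (n : ℕ) : 1 ≤ n →
    0 < gq n ∧ 16/25 ≤ rr n ∧ rr n ≤ 1 ∧ (3 ≤ n → rr n ≤ 7/10) := by
  induction n using Nat.strong_induction_on with
  | _ n ih =>
    intro hn
    by_cases h5 : n ≤ 4
    · interval_cases n
      · refine ⟨by rw [gq_one]; norm_num, ?_, ?_, by omega⟩ <;> rw [rr_one] <;> norm_num
      · refine ⟨by rw [gq_two]; norm_num, ?_, ?_, by omega⟩ <;> rw [rr_two] <;> norm_num
      · refine ⟨by rw [gq_three]; norm_num, ?_, ?_, fun _ => ?_⟩ <;> rw [rr_three] <;> norm_num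
      · refine ⟨by rw [gq_four]; norm_num, ?_, ?_, fun _ => ?_⟩ <;> rw [rr_four] <;> norm_num
    · push_neg at h5
      have h5' : 5 ≤ n := h5
      have hgpos : ∀ m, m < n → 0 < gq m := by
        intro m hm
        rcases Nat.eq_zero_or_pos m with h | h
        · rw [h, gq_zero]; norm_num
        · exact (ih m hm h).1
      have hglow : ∀ m, 1 ≤ m → m < n → 16/25 ≤ rr m := fun m h1 h2 => (ih m h2 h1).2.1
      have hgup : ∀ m, 1 ≤ m → m < n → rr m ≤ 1 := fun m h1 h2 => (ih m h2 h1).2.2.1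
      have hgup3 : ∀ m, 3 ≤ m → m < n → rr m ≤ 7/10 :=
        fun m h1 h2 => (ih m h2 (by omega)).2.2.2 h1
      have hzpos : 0 < gq (n - 1) := hgpos _ (by omega)
      have hz : gq (n - 1) ≠ 0 := ne_of_gt hzpos
      -- rho bounds
      have hrho : ∀ k, 1 ≤ k → k ≤ n → 1 ≤ rho n k ∧ rho n k ≤ (25/16) ^ (k - 1) := by
        intro k hk1
        induction k, hk1 using Nat.le_induction with
        | base => intro _; rw [rho_one hzpos]; norm_num
        | succ k hk ihk =>
          intro hk1n
          obtain ⟨hl, hu⟩ := ihk (by omega)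
          have hnk1 : 1 ≤ n - k := by omega
          have hnkn : n - k < n := by omega
          have hrrl := hglow (n - k) hnk1 hnkn
          have hrru := hgup (n - k) hnk1 hnkn
          have hx : gq (n - (k + 1)) ≠ 0 := ne_of_gt (hgpos _ (by omega))
          have hy : gq (n - k) ≠ 0 := ne_of_gt (hgpos _ (by omega))
          rw [rho_succ hk (by omega) hx hy hz]
          have hrrpos : 0 < rr (n - k) := lt_of_lt_of_le (by norm_num) hrrl
          have hppos : (0:ℚ) < (25/16) ^ (k - 1) := by positivity
          constructor
          · rw [le_div_iff₀ hrrpos]; nlinarith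
          · rw [div_le_iff₀ hrrpos]
            have hps : (25/16:ℚ) ^ (k + 1 - 1) = (25/16) ^ (k - 1) * (25/16) := by
              rw [← pow_succ]; congr 1; omega
            rw [hps]
            nlinarith
      -- refined bounds for rho 2 and rho 3
      have hrr1l := hglow (n - 1) (by omega) (by omega)
      have hrr1u := hgup3 (n - 1) (by omega) (by omega)
      have hrr1pos : 0 < rr (n - 1) := lt_of_lt_of_le (by norm_num) hrr1l
      have hrr2l := hglow (n - 2) (by omega) (by omega)
      have hrr2u := hgup3 (n - 2) (by omega) (by omega)
      have hrr2pos : 0 < rr (n - 2) := lt_of_lt_of_le (by norm_num) hrr2l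
      have hρ1 : rho n 1 = 1 := rho_one hzpos
      have hρ2 : rho n 2 = 1 / rr (n - 1) := by
        have := rho_succ (n := n) (k := 1) le_rfl (by omega)
          (ne_of_gt (hgpos _ (by omega))) (ne_of_gt (hgpos _ (by omega))) hz
        rw [this, hρ1]
      have h2l : 10/7 ≤ rho n 2 := by
        rw [hρ2, le_div_iff₀ hrr1pos]; linarith
      have h2u : rho n 2 ≤ 25/16 := by
        rw [hρ2, div_le_iff₀ hrr1pos]; linarith
      have hρ3 : rho n 3 = rho n 2 / rr (n - 2) := by
        have := rho_succ (n := n) (k := 2) (by omega) (by omega)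
          (ne_of_gt (hgpos _ (by omega))) (ne_of_gt (hgpos _ (by omega))) hz
        rw [this]
      have h3l : 100/49 ≤ rho n 3 := by
        rw [hρ3, le_div_iff₀ hrr2pos]; nlinarith
      have h3u : rho n 3 ≤ 625/256 := by
        rw [hρ3, div_le_iff₀ hrr2pos]; nlinarith
      obtain ⟨h4l, h4u'⟩ := hrho 4 (by omega) (by omega)
      have h4u : rho n 4 ≤ 15625/4096 := by
        calc rho n 4 ≤ (25/16:ℚ) ^ (4 - 1) := h4u'
        _ = 15625/4096 := by norm_num
      -- the expression
      have hexpr := rr_expr (by omega : 1 ≤ n) hz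
      have hsplit : Finset.Icc 1 n =
          insert 1 (insert 2 (insert 3 (insert 4 (Finset.Icc 5 n)))) := by
        ext k
        simp only [Finset.mem_Icc, Finset.mem_insert]
        omega
      have hm1 : (1:ℕ) ∉ insert 2 (insert 3 (insert 4 (Finset.Icc 5 n))) := by
        simp [Finset.mem_Icc]
      have hm2 : (2:ℕ) ∉ insert 3 (insert 4 (Finset.Icc 5 n)) := by
        simp [Finset.mem_Icc]
      have hm3 : (3:ℕ) ∉ insert 4 (Finset.Icc 5 n) := by
        simp [Finset.mem_Icc]
      have hm4 : (4:ℕ) ∉ Finset.Icc 5 n := by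
        simp [Finset.mem_Icc]
      rw [hsplit, Finset.sum_insert hm1, Finset.sum_insert hm2, Finset.sum_insert hm3,
        Finset.sum_insert hm4] at hexpr
      rw [cc_one, cc_two, cc_three, cc_four, hρ1] at hexpr
      norm_num at hexpr
      -- the tail
      have hE : |∑ k ∈ Finset.Icc 5 n, (-1:ℚ) ^ (k + 1) * cc k * rho n k| ≤ 1/5000 := by
        calc |∑ k ∈ Finset.Icc 5 n, (-1:ℚ) ^ (k + 1) * cc k * rho n k|
            ≤ ∑ k ∈ Finset.Icc 5 n, |(-1:ℚ) ^ (k + 1) * cc k * rho n k| :=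
              Finset.abs_sum_le_sum_abs _ _
          _ ≤ ∑ k ∈ Finset.Icc 5 n, cc k * (25/16) ^ (k - 1) := by
              refine Finset.sum_le_sum fun k hk => ?_
              rw [Finset.mem_Icc] at hk
              obtain ⟨hkl, hku⟩ := hrho k (by omega) hk.2
              rw [abs_mul, abs_mul, abs_pow, abs_neg, abs_one, one_pow, one_mul,
                abs_of_pos (cc_pos k), abs_of_pos (by linarith : (0:ℚ) < rho n k)]
              exact mul_le_mul_of_nonneg_left hku (le_of_lt (cc_pos k))
          _ ≤ 1/5000 - (1/5000) * (1/2) ^ (n - 4) := tail_sum_aux (by omega)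
          _ ≤ 1/5000 := by
              have : (0:ℚ) < (1/2) ^ (n - 4) := by positivity
              linarith
      obtain ⟨hEl, hEu⟩ := abs_le.mp hE
      -- conclude
      have hrrlow : 16/25 ≤ rr n := by rw [hexpr]; linarith
      have hrrup : rr n ≤ 7/10 := by rw [hexpr]; linarith
      refine ⟨?_, hrrlow, by linarith, fun _ => hrrup⟩
      have hgqn : gq n = rr n * gq (n - 1) := by
        unfold rr; field_simp
      rw [hgqn]
      have : (0:ℚ) < rr n := by linarith
      exact mul_pos this hzpos

lemma gq_pos : ∀ m, 0 < gq m := by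
  intro m
  rcases Nat.eq_zero_or_pos m with h | h
  · rw [h, gq_zero]; norm_num
  · exact (L1 m h).1

lemma rr_low {m : ℕ} (h : 1 ≤ m) : 16/25 ≤ rr m := (L1 m h).2.1
lemma rr_up {m : ℕ} (h : 1 ≤ m) : rr m ≤ 1 := (L1 m h).2.2.1
lemma rr_pos {m : ℕ} (h : 1 ≤ m) : 0 < rr m := lt_of_lt_of_le (by norm_num) (rr_low h)

lemma rho_bounds (n : ℕ) : ∀ k, 1 ≤ k → k ≤ n →
    1 ≤ rho n k ∧ rho n k ≤ (25/16) ^ (k - 1) := by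
  intro k hk1
  induction k, hk1 using Nat.le_induction with
  | base =>
    intro hn
    rw [rho_one (gq_pos _)]
    norm_num
  | succ k hk ihk =>
    intro hk1n
    obtain ⟨hl, hu⟩ := ihk (by omega)
    have hnk1 : 1 ≤ n - k := by omega
    have hrrl := rr_low hnk1
    have hrru := rr_up hnk1
    have hrrpos := rr_pos hnk1
    rw [rho_succ hk (by omega) (ne_of_gt (gq_pos _)) (ne_of_gt (gq_pos _))
      (ne_of_gt (gq_pos _))]
    have hppos : (0:ℚ) < (25/16) ^ (k - 1) := by positivity
    constructor
    · rw [le_div_iff₀ hrrpos]; nlinarith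
    · rw [div_le_iff₀ hrrpos]
      have hps : (25/16:ℚ) ^ (k + 1 - 1) = (25/16) ^ (k - 1) * (25/16) := by
        rw [← pow_succ]; congr 1; omega
      rw [hps]
      nlinarith

noncomputable def dd (n : ℕ) : ℚ := rr (n + 1) - rr n

lemma dd_one : dd 1 = -(1/4) := by unfold dd; rw [rr_two, rr_one]; norm_num
lemma dd_two : dd 2 = -(1/18) := by unfold dd; rw [rr_three, rr_two]; norm_num

/-- the difference of the rho's -/
lemma delta_bound (n : ℕ) (hn : 1 ≤ n) : ∀ k, 1 ≤ k → k ≤ n →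
    |rho (n + 1) k - rho n k| ≤ (25/16) ^ k * ∑ j ∈ Finset.Icc 1 (k - 1), |dd (n - j)| := by
  intro k hk1
  induction k, hk1 using Nat.le_induction with
  | base =>
    intro hkn
    rw [rho_one (gq_pos _), rho_one (gq_pos _)]
    simp
  | succ k hk ihk =>
    intro hk1n
    have hkn : k ≤ n := by omega
    have hδ := ihk hkn
    have hnk1 : 1 ≤ n - k := by omega
    have hb : 16/25 ≤ rr (n - k) := rr_low hnk1
    have hbpos : 0 < rr (n - k) := rr_pos hnk1
    have hb' : 16/25 ≤ rr (n + 1 - k) := rr_low (by omega)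
    have hb'pos : 0 < rr (n + 1 - k) := rr_pos (by omega)
    have hA := rho_bounds n k (by omega) hkn
    have hA' := rho_bounds (n + 1) k (by omega) (by omega)
    -- expand the two rho's
    have e1 : rho (n + 1) (k + 1) = rho (n + 1) k / rr (n + 1 - k) := by
      have := rho_succ (n := n + 1) (k := k) (by omega) (by omega)
        (ne_of_gt (gq_pos _)) (ne_of_gt (gq_pos _)) (ne_of_gt (gq_pos _))
      rw [this]
    have e2 : rho n (k + 1) = rho n k / rr (n - k) := by
      rw [rho_succ hk (by omega) (ne_of_gt (gq_pos _)) (ne_of_gt (gq_pos _))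
        (ne_of_gt (gq_pos _))]
    have hdd : rr (n + 1 - k) - rr (n - k) = dd (n - k) := by
      unfold dd
      congr 2
      omega
    have key : rho (n + 1) (k + 1) - rho n (k + 1) =
        (rho (n + 1) k - rho n k) / rr (n + 1 - k) +
          rho n k * (rr (n - k) - rr (n + 1 - k)) / (rr (n - k) * rr (n + 1 - k)) := by
      rw [e1, e2]
      field_simp
      ring
    rw [key]
    have habs : |(rho (n + 1) k - rho n k) / rr (n + 1 - k) +
        rho n k * (rr (n - k) - rr (n + 1 - k)) / (rr (n - k) * rr (n + 1 - k))| ≤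
        |rho (n + 1) k - rho n k| / rr (n + 1 - k) +
          rho n k * |dd (n - k)| / (rr (n - k) * rr (n + 1 - k)) := by
      calc |(rho (n + 1) k - rho n k) / rr (n + 1 - k) +
          rho n k * (rr (n - k) - rr (n + 1 - k)) / (rr (n - k) * rr (n + 1 - k))|
          ≤ |(rho (n + 1) k - rho n k) / rr (n + 1 - k)| +
            |rho n k * (rr (n - k) - rr (n + 1 - k)) / (rr (n - k) * rr (n + 1 - k))| :=
          abs_add_le _ _
        _ = |rho (n + 1) k - rho n k| / rr (n + 1 - k) +
            rho n k * |rr (n - k) - rr (n + 1 - k)| / (rr (n - k) * rr (n + 1 - k)) := by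
          rw [abs_div, abs_of_pos hb'pos, abs_div, abs_mul,
            abs_of_pos (lt_of_lt_of_le one_pos hA.1), abs_of_pos (mul_pos hbpos hb'pos)]
        _ = _ := by
          rw [show |rr (n - k) - rr (n + 1 - k)| = |dd (n - k)| by
            rw [← hdd, abs_sub_comm]]
    refine le_trans habs ?_
    -- now the numeric estimates
    have hsum : Finset.Icc 1 (k + 1 - 1) = insert k (Finset.Icc 1 (k - 1)) := by
      ext j
      simp only [Finset.mem_Icc, Finset.mem_insert]
      omega
    rw [hsum, Finset.sum_insert (by simp [Finset.mem_Icc]; omega)]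
    have hS : (0:ℚ) ≤ ∑ j ∈ Finset.Icc 1 (k - 1), |dd (n - j)| :=
      Finset.sum_nonneg fun j _ => abs_nonneg _
    have t1 : |rho (n + 1) k - rho n k| / rr (n + 1 - k) ≤
        (25/16) * ((25/16) ^ k * ∑ j ∈ Finset.Icc 1 (k - 1), |dd (n - j)|) := by
      rw [div_le_iff₀ hb'pos]
      have h1 : (25/16:ℚ) * ((25/16) ^ k * ∑ j ∈ Finset.Icc 1 (k - 1), |dd (n - j)|)
          * rr (n + 1 - k) ≥ (25/16) ^ k * (∑ j ∈ Finset.Icc 1 (k - 1), |dd (n - j)|) * 1 := by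
        have hp : (0:ℚ) < (25/16) ^ k := by positivity
        have hone : (1:ℚ) ≤ 25/16 * rr (n + 1 - k) := by linarith
        nlinarith [mul_le_mul_of_nonneg_left hone
          (mul_nonneg hp.le hS)]
      calc |rho (n + 1) k - rho n k|
          ≤ (25/16) ^ k * ∑ j ∈ Finset.Icc 1 (k - 1), |dd (n - j)| := hδ
        _ = (25/16) ^ k * (∑ j ∈ Finset.Icc 1 (k - 1), |dd (n - j)|) * 1 := by ring
        _ ≤ _ := h1
    have t2 : rho n k * |dd (n - k)| / (rr (n - k) * rr (n + 1 - k)) ≤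
        (25/16) ^ (k + 1) * |dd (n - k)| := by
      rw [div_le_iff₀ (mul_pos hbpos hb'pos)]
      have hddnn : (0:ℚ) ≤ |dd (n - k)| := abs_nonneg _
      have hAk : rho n k ≤ (25/16) ^ (k - 1) := hA.2
      have hps : (25/16:ℚ) ^ (k + 1) = (25/16) ^ (k - 1) * (25/16) ^ 2 := by
        rw [← pow_add]; congr 1; omega
      have hp1 : (0:ℚ) < (25/16) ^ (k - 1) := by positivity
      rw [hps]
      have hbb : (16/25:ℚ) * (16/25) ≤ rr (n - k) * rr (n + 1 - k) :=
        mul_le_mul hb hb' (by norm_num) (by linarith)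
      nlinarith [mul_le_mul_of_nonneg_right hAk hddnn,
        mul_le_mul_of_nonneg_left hbb (mul_nonneg hp1.le hddnn)]
    calc |rho (n + 1) k - rho n k| / rr (n + 1 - k) +
        rho n k * |dd (n - k)| / (rr (n - k) * rr (n + 1 - k))
        ≤ (25/16) * ((25/16) ^ k * ∑ j ∈ Finset.Icc 1 (k - 1), |dd (n - j)|) +
          (25/16) ^ (k + 1) * |dd (n - k)| := add_le_add t1 t2
      _ = (25/16) ^ (k + 1) * (|dd (n - k)| + ∑ j ∈ Finset.Icc 1 (k - 1), |dd (n - j)|) := by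
          rw [pow_succ]
          ring

lemma cc_five : cc 5 = 1/122880 := by
  unfold cc; norm_num [Nat.factorial, show Nat.choose 5 2 = 10 from rfl]

lemma dagCount_five : dagCount 5 = 29281 := by
  have h := key 5 (by norm_num)
  rw [show (5:ℕ)+1 = 6 from rfl] at h
  rw [Finset.sum_range_succ, Finset.sum_range_succ, Finset.sum_range_succ,
    Finset.sum_range_succ, Finset.sum_range_succ, Finset.sum_range_succ,
    Finset.range_zero, Finset.sum_empty] at h
  norm_num [dagCount_zero, dagCount_one, dagCount_two, dagCount_three, dagCount_four,
    show Nat.choose 5 2 = 10 from rfl, show Nat.choose 5 3 = 10 from rfl,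
    show Nat.choose 5 4 = 5 from rfl, show Nat.choose 5 5 = 1 from rfl] at h
  omega

lemma gq_five : gq 5 = 29281/122880 := by
  unfold gq; rw [dagCount_five]
  norm_num [Nat.factorial, show Nat.choose 5 2 = 10 from rfl]

lemma rr_five : rr 5 = 29281/43440 := by
  unfold rr; rw [gq_five, gq_four]; norm_num

lemma dd_three : dd 3 = -(113/7200) := by
  unfold dd; rw [rr_four, rr_three]; norm_num

lemma dd_four : dd 4 = rr 5 - rr 4 := rfl

/-- weight terms for the Lipschitz sum -/
lemma Wterm_le {k : ℕ} (hk : 5 ≤ k) :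
    cc k * (k:ℚ) * (125/76) ^ k ≤ (1/2000) * (1/2) ^ (k - 5) := by
  induction k, hk using Nat.le_induction with
  | base =>
    rw [cc_five]
    norm_num
  | succ k hk ih =>
    have hkq : (1:ℚ) ≤ (k:ℚ) := by exact_mod_cast Nat.one_le_iff_ne_zero.mpr (by omega)
    have e : cc (k+1) * ((k:ℚ)+1) * (125/76) ^ (k+1) =
        (cc k * (k:ℚ) * (125/76) ^ k) * ((125/76) / ((k:ℚ) * 2 ^ k)) := by
      rw [cc_succ, pow_succ]
      have h1 : ((k:ℚ) + 1) ≠ 0 := by positivity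
      have h2 : ((2:ℚ) ^ k) ≠ 0 := by positivity
      have h3 : (k:ℚ) ≠ 0 := by positivity
      field_simp
    have hfac : (125/76:ℚ) / ((k:ℚ) * 2 ^ k) ≤ 1/2 := by
      have h2k : (32:ℚ) ≤ 2 ^ k := by
        calc (32:ℚ) = 2 ^ 5 := by norm_num
        _ ≤ 2 ^ k := by apply pow_le_pow_right₀ (by norm_num) hk
      have hk5 : (5:ℚ) ≤ (k:ℚ) := by exact_mod_cast hk
      have : (160:ℚ) ≤ (k:ℚ) * 2 ^ k := by nlinarith
      rw [div_le_iff₀ (by linarith)]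
      linarith
    have hWpos : (0:ℚ) ≤ cc k * (k:ℚ) * (125/76) ^ k := by
      have := cc_pos k
      positivity
    push_cast
    rw [e]
    have h1 : k - 4 = (k - 5) + 1 := by omega
    rw [h1, pow_succ]
    calc (cc k * (k:ℚ) * (125/76) ^ k) * ((125/76) / ((k:ℚ) * 2 ^ k))
        ≤ ((1/2000) * (1/2) ^ (k-5)) * (1/2) := by
          apply mul_le_mul ih hfac (by positivity) (by positivity)
      _ = 1/2000 * ((1/2) ^ (k-5) * (1/2)) := by ring

lemma Wsum_le {n : ℕ} (hn : 4 ≤ n) :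
    ∑ k ∈ Finset.Icc 5 n, cc k * (k:ℚ) * (125/76) ^ k ≤
      1/1000 - (1/1000) * (1/2) ^ (n - 4) := by
  induction n, hn using Nat.le_induction with
  | base => simp
  | succ n hn ih =>
    have hins : Finset.Icc 5 (n + 1) = insert (n + 1) (Finset.Icc 5 n) := by
      ext k; simp only [Finset.mem_Icc, Finset.mem_insert]; omega
    rw [hins, Finset.sum_insert (by simp [Finset.mem_Icc])]
    have hterm := Wterm_le (k := n + 1) (by omega)
    have h1 : n + 1 - 5 = n - 4 := by omega
    have h2 : n + 1 - 4 = (n - 4) + 1 := by omega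
    rw [h1] at hterm
    rw [h2, pow_succ (1/2:ℚ) (n - 4)]
    linarith

/-- the extra term -/
lemma extra_le {n : ℕ} (hn : 3 ≤ n) :
    cc (n + 1) * (25/16) ^ n ≤ (1/20) * (19/20) ^ n := by
  induction n, hn using Nat.le_induction with
  | base =>
    rw [cc_four]
    norm_num
  | succ n hn ih =>
    have e : cc (n + 1 + 1) * (25/16:ℚ) ^ (n+1) =
        (cc (n+1) * (25/16) ^ n) * ((25/16) / (((n:ℚ)+2) * 2 ^ (n+1))) := by
      rw [cc_succ (n+1), pow_succ]
      have h1 : ((n:ℚ) + 1 + 1) ≠ 0 := by positivity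
      have h2 : ((2:ℚ) ^ (n+1)) ≠ 0 := by positivity
      field_simp
      push_cast
      ring
    have hfac : (25/16:ℚ) / (((n:ℚ)+2) * 2 ^ (n+1)) ≤ 19/20 := by
      have h2k : (16:ℚ) ≤ 2 ^ (n+1) := by
        calc (16:ℚ) = 2 ^ 4 := by norm_num
        _ ≤ 2 ^ (n+1) := by apply pow_le_pow_right₀ (by norm_num) (by omega)
      have hk5 : (3:ℚ) ≤ (n:ℚ) := by exact_mod_cast hn
      have : (80:ℚ) ≤ ((n:ℚ)+2) * 2 ^ (n+1) := by nlinarith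
      rw [div_le_iff₀ (by linarith)]
      linarith
    rw [e, pow_succ (19/20:ℚ) n]
    have hp : (0:ℚ) ≤ cc (n+1) * (25/16) ^ n := by
      have := cc_pos (n+1)
      positivity
    calc (cc (n+1) * (25/16) ^ n) * ((25/16) / (((n:ℚ)+2) * 2 ^ (n+1)))
        ≤ ((1/20) * (19/20) ^ n) * (19/20) := by
          apply mul_le_mul ih hfac (by positivity) (by positivity)
      _ = 1/20 * ((19/20) ^ n * (19/20)) := by ring

theorem L2 (n : ℕ) : 1 ≤ n → |dd n| ≤ (2/5) * (19/20) ^ n := by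
  induction n using Nat.strong_induction_on with
  | _ n ih =>
    intro hn
    by_cases h5 : n ≤ 4
    · interval_cases n
      · rw [dd_one]; rw [abs_le]; constructor <;> norm_num
      · rw [dd_two]; rw [abs_le]; constructor <;> norm_num
      · rw [dd_three]; rw [abs_le]; constructor <;> norm_num
      · rw [dd_four, rr_five, rr_four]; rw [abs_le]; constructor <;> norm_num
    · push_neg at h5
      have h5' : 5 ≤ n := h5
      -- the expression for dd n
      have e1 := rr_expr (n := n + 1) (by omega) (ne_of_gt (gq_pos _))
      have e2 := rr_expr (n := n) (by omega) (ne_of_gt (gq_pos _))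
      have hins : Finset.Icc 1 (n + 1) = insert (n + 1) (Finset.Icc 1 n) := by
        ext k; simp only [Finset.mem_Icc, Finset.mem_insert]; omega
      rw [hins, Finset.sum_insert (by simp [Finset.mem_Icc])] at e1
      have hsplit2 : ∑ k ∈ Finset.Icc 1 n, (-1:ℚ) ^ (k+1) * cc k * (rho (n+1) k - rho n k) =
          (∑ k ∈ Finset.Icc 1 n, (-1:ℚ) ^ (k+1) * cc k * rho (n+1) k) -
            ∑ k ∈ Finset.Icc 1 n, (-1:ℚ) ^ (k+1) * cc k * rho n k := by
        rw [← Finset.sum_sub_distrib]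
        exact Finset.sum_congr rfl fun k _ => by ring
      have hiden : dd n = (-1:ℚ) ^ (n+1+1) * cc (n+1) * rho (n+1) (n+1) +
          ∑ k ∈ Finset.Icc 1 n, (-1:ℚ) ^ (k+1) * cc k * (rho (n+1) k - rho n k) := by
        unfold dd
        rw [e1, e2, hsplit2]
        ring
      -- bound the extra term
      have hrhoNN := rho_bounds (n+1) (n+1) (by omega) le_rfl
      have hT : |(-1:ℚ) ^ (n+1+1) * cc (n+1) * rho (n+1) (n+1)| ≤ cc (n+1) * (25/16) ^ n := by
        rw [abs_mul, abs_mul, abs_pow, abs_neg, abs_one, one_pow, one_mul,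
          abs_of_pos (cc_pos _), abs_of_pos (lt_of_lt_of_le one_pos hrhoNN.1)]
        have h1 : rho (n+1) (n+1) ≤ (25/16) ^ n := by
          have := hrhoNN.2
          rwa [show n + 1 - 1 = n from rfl] at this
        exact mul_le_mul_of_nonneg_left h1 (le_of_lt (cc_pos _))
      -- bound the sum
      have hterm : ∀ k ∈ Finset.Icc 1 n,
          |(-1:ℚ) ^ (k+1) * cc k * (rho (n+1) k - rho n k)| ≤
            (2/5) * (19/20) ^ (n+1) * (cc k * ((k:ℚ) - 1) * (125/76) ^ k) := by
        intro k hk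
        rw [Finset.mem_Icc] at hk
        obtain ⟨hk1, hkn⟩ := hk
        rw [abs_mul, abs_mul, abs_pow, abs_neg, abs_one, one_pow, one_mul,
          abs_of_pos (cc_pos _)]
        have hδ := delta_bound n (by omega) k hk1 hkn
        -- inner sum bound
        have hinner : ∑ j ∈ Finset.Icc 1 (k-1), |dd (n - j)| ≤
            ((k:ℚ) - 1) * ((2/5) * (19/20) ^ (n+1-k)) := by
          have hb : ∀ j ∈ Finset.Icc 1 (k-1), |dd (n - j)| ≤ (2/5) * (19/20) ^ (n+1-k) := by
            intro j hj
            rw [Finset.mem_Icc] at hj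
            have hnj1 : 1 ≤ n - j := by omega
            have hnjn : n - j < n := by omega
            have := ih (n - j) hnjn hnj1
            refine le_trans this ?_
            have hple : (19/20:ℚ) ^ (n-j) ≤ (19/20) ^ (n+1-k) := by
              apply pow_le_pow_of_le_one (by norm_num) (by norm_num)
              omega
            linarith
          calc ∑ j ∈ Finset.Icc 1 (k-1), |dd (n - j)|
              ≤ ∑ _j ∈ Finset.Icc 1 (k-1), (2/5) * (19/20:ℚ) ^ (n+1-k) :=
                Finset.sum_le_sum hb
            _ = ((k:ℚ) - 1) * ((2/5) * (19/20) ^ (n+1-k)) := by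
                rw [Finset.sum_const, Nat.card_Icc, nsmul_eq_mul]
                congr 1
                rw [show k - 1 + 1 - 1 = k - 1 from by omega, Nat.cast_sub hk1, Nat.cast_one]
        -- power juggling
        have hq : (19/20:ℚ) ^ (n+1-k) * (19/20) ^ k = (19/20) ^ (n+1) := by
          rw [← pow_add]; congr 1; omega
        have hone : (19/20:ℚ) ^ k * (20/19) ^ k = 1 := by
          rw [← mul_pow]; norm_num
        have h125 : (125/76:ℚ) ^ k = (25/16) ^ k * (20/19) ^ k := by
          rw [← mul_pow]; norm_num
        have hpows : (19/20:ℚ) ^ (n+1) * (125/76) ^ k = (19/20) ^ (n+1-k) * (25/16) ^ k := by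
          rw [h125, ← hq]
          calc (19/20:ℚ) ^ (n+1-k) * (19/20) ^ k * ((25/16) ^ k * (20/19) ^ k)
              = (19/20) ^ (n+1-k) * (25/16) ^ k * ((19/20) ^ k * (20/19) ^ k) := by ring
            _ = (19/20) ^ (n+1-k) * (25/16) ^ k := by rw [hone, mul_one]
        have heq : (2/5:ℚ) * (19/20) ^ (n+1) * (cc k * ((k:ℚ) - 1) * (125/76) ^ k) =
            cc k * ((25/16) ^ k * (((k:ℚ) - 1) * ((2/5) * (19/20) ^ (n+1-k)))) := by
          linear_combination (2/5 * cc k * ((k:ℚ) - 1)) * hpows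
        have hSnn : (0:ℚ) ≤ ∑ j ∈ Finset.Icc 1 (k-1), |dd (n - j)| :=
          Finset.sum_nonneg fun j _ => abs_nonneg _
        calc cc k * |rho (n+1) k - rho n k|
            ≤ cc k * ((25/16) ^ k * ∑ j ∈ Finset.Icc 1 (k-1), |dd (n - j)|) :=
              mul_le_mul_of_nonneg_left hδ (cc_pos k).le
          _ ≤ cc k * ((25/16) ^ k * (((k:ℚ) - 1) * ((2/5) * (19/20) ^ (n+1-k)))) := by
              refine mul_le_mul_of_nonneg_left ?_ (cc_pos k).le
              exact mul_le_mul_of_nonneg_left hinner (by positivity)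
          _ = (2/5) * (19/20) ^ (n+1) * (cc k * ((k:ℚ) - 1) * (125/76) ^ k) := heq.symm
      -- sum of the weights
      have hwsum : ∑ k ∈ Finset.Icc 1 n, cc k * ((k:ℚ) - 1) * (125/76) ^ k ≤ 9/10 := by
        have hsplit : Finset.Icc 1 n =
            insert 1 (insert 2 (insert 3 (insert 4 (Finset.Icc 5 n)))) := by
          ext k
          simp only [Finset.mem_Icc, Finset.mem_insert]
          omega
        rw [hsplit, Finset.sum_insert (by simp [Finset.mem_Icc]),
          Finset.sum_insert (by simp [Finset.mem_Icc]),
          Finset.sum_insert (by simp [Finset.mem_Icc]),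
          Finset.sum_insert (by simp [Finset.mem_Icc])]
        have htail : ∑ k ∈ Finset.Icc 5 n, cc k * ((k:ℚ) - 1) * (125/76) ^ k ≤ 1/1000 := by
          have h1 : ∑ k ∈ Finset.Icc 5 n, cc k * ((k:ℚ) - 1) * (125/76) ^ k ≤
              ∑ k ∈ Finset.Icc 5 n, cc k * (k:ℚ) * (125/76) ^ k := by
            refine Finset.sum_le_sum fun k hk => ?_
            have h2 : ((k:ℚ) - 1) ≤ (k:ℚ) := by linarith
            have := cc_pos k
            have h3 : (0:ℚ) ≤ (125/76) ^ k := by positivity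
            nlinarith
          refine le_trans h1 (le_trans (Wsum_le (by omega)) ?_)
          have : (0:ℚ) < (1/2) ^ (n - 4) := by positivity
          linarith
        rw [cc_one, cc_two, cc_three, cc_four]
        norm_num
        nlinarith [htail]
      -- final assembly
      have hstep2 : |∑ k ∈ Finset.Icc 1 n, (-1:ℚ) ^ (k+1) * cc k * (rho (n+1) k - rho n k)| ≤
          (2/5) * (19/20) ^ (n+1) * (9/10) := by
        calc |∑ k ∈ Finset.Icc 1 n, (-1:ℚ) ^ (k+1) * cc k * (rho (n+1) k - rho n k)|
            ≤ ∑ k ∈ Finset.Icc 1 n, |(-1:ℚ) ^ (k+1) * cc k * (rho (n+1) k - rho n k)| :=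
              Finset.abs_sum_le_sum_abs _ _
          _ ≤ ∑ k ∈ Finset.Icc 1 n,
                (2/5) * (19/20) ^ (n+1) * (cc k * ((k:ℚ) - 1) * (125/76) ^ k) :=
              Finset.sum_le_sum hterm
          _ = (2/5) * (19/20) ^ (n+1) *
                ∑ k ∈ Finset.Icc 1 n, cc k * ((k:ℚ) - 1) * (125/76) ^ k := by
              rw [Finset.mul_sum]
          _ ≤ (2/5) * (19/20) ^ (n+1) * (9/10) := by
              refine mul_le_mul_of_nonneg_left hwsum (by positivity)
      have hex := extra_le (n := n) (by omega)
      have hθ : (0:ℚ) < (19/20) ^ n := by positivity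
      calc |dd n| ≤ |(-1:ℚ) ^ (n+1+1) * cc (n+1) * rho (n+1) (n+1)| +
            |∑ k ∈ Finset.Icc 1 n, (-1:ℚ) ^ (k+1) * cc k * (rho (n+1) k - rho n k)| := by
            rw [hiden]; exact abs_add_le _ _
        _ ≤ cc (n+1) * (25/16) ^ n + (2/5) * (19/20) ^ (n+1) * (9/10) := add_le_add hT hstep2
        _ ≤ (1/20) * (19/20) ^ n + (2/5) * ((19/20) ^ n * (19/20)) * (9/10) := by
            rw [← pow_succ]
            exact add_le_add hex le_rfl
        _ ≤ (2/5) * (19/20) ^ n := by nlinarith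

lemma dag_pos (m : ℕ) : 0 < dagCount m := by
  by_contra h
  have h0 : dagCount m = 0 := by omega
  have := gq_pos m
  unfold gq at this
  rw [h0] at this
  norm_num at this

lemma rr_eq (k : ℕ) :
    rr (k + 1) = (dagCount (k+1) : ℚ) / ((dagCount k : ℚ) * ((k:ℚ)+1) * 2 ^ k) := by
  unfold rr gq
  rw [Nat.add_sub_cancel, Nat.factorial_succ, choose_two_succ, pow_add]
  have h1 : ((k.factorial : ℚ)) ≠ 0 := by positivity
  have h2 : ((2:ℚ) ^ (k.choose 2)) ≠ 0 := by positivity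
  have h3 : ((2:ℚ) ^ k) ≠ 0 := by positivity
  have h4 : ((k:ℚ) + 1) ≠ 0 := by positivity
  have h5 : (dagCount k : ℚ) ≠ 0 := by
    have := dag_pos k
    positivity
  push_cast
  field_simp

lemma small_pow : ∀ n : ℕ, 100 ≤ n → ((n:ℚ) + 1) * ((2/5) * (19/20) ^ n) ≤ 16/25 := by
  intro n hn
  induction n, hn using Nat.le_induction with
  | base => norm_num
  | succ n hn ih =>
    have hθ : (0:ℚ) < (19/20) ^ n := by positivity
    have hnq : (100:ℚ) ≤ (n:ℚ) := by exact_mod_cast hn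
    have hstep : ((n:ℚ) + 1 + 1) * ((2/5) * (19/20) ^ (n+1)) ≤
        ((n:ℚ) + 1) * ((2/5) * (19/20) ^ n) := by
      rw [pow_succ]
      nlinarith
    push_cast
    linarith

lemma ratio_step {n : ℕ} (hn : 100 ≤ n) :
    (n:ℚ) * rr n ≤ ((n:ℚ) + 1) * rr (n + 1) := by
  have hlow := rr_low (show 1 ≤ n by omega)
  have hd := L2 n (by omega)
  have hsp := small_pow n hn
  have habs := (abs_le.mp hd).1
  have hrr1 : rr (n + 1) = rr n + dd n := by unfold dd; ring
  rw [hrr1]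
  have hnn : (0:ℚ) ≤ (n:ℚ) := by positivity
  nlinarith

lemma dag_ineq {n : ℕ} (hn : 100 ≤ n) :
    2 * (dagCount n * dagCount n) ≤ dagCount (n + 1) * dagCount (n - 1) := by
  have hstep := ratio_step hn
  have hn1 : n - 1 + 1 = n := by omega
  have e1 := rr_eq n
  have e2 := rr_eq (n - 1)
  rw [hn1] at e2
  rw [e1, e2] at hstep
  have hAp : ∀ m, (0:ℚ) < (dagCount m : ℚ) := fun m => by
    have := dag_pos m
    positivity
  have h2p : (0:ℚ) < 2 ^ (n-1) := by positivity
  have h2p' : (0:ℚ) < 2 ^ n := by positivity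
  have hnq : (0:ℚ) < (n:ℚ) := by
    have : 0 < n := by omega
    exact_mod_cast this
  have hn1q : ((n - 1 : ℕ):ℚ) + 1 = (n:ℚ) := by
    have : ((n - 1 : ℕ):ℚ) = (n:ℚ) - 1 := by
      rw [Nat.cast_sub (by omega), Nat.cast_one]
    rw [this]; ring
  rw [hn1q] at hstep
  -- clear denominators in hstep
  rw [← mul_div_assoc, ← mul_div_assoc] at hstep
  rw [div_le_div_iff₀
    (mul_pos (mul_pos (hAp _) hnq) h2p)
    (mul_pos (mul_pos (hAp _) (by linarith : (0:ℚ) < (n:ℚ)+1)) h2p')] at hstep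
  have hpow : (2:ℚ) ^ n = 2 ^ (n-1) * 2 := by
    rw [← pow_succ]
    congr 1
    omega
  rw [hpow] at hstep
  have hK : (0:ℚ) < (n:ℚ) * ((n:ℚ)+1) * 2^(n-1) := by
    apply mul_pos (mul_pos hnq (by linarith)) h2p
  have h2 : ((n:ℚ) * ((n:ℚ)+1) * 2^(n-1)) * (2*((dagCount n : ℚ)*(dagCount n : ℚ))) ≤
      ((n:ℚ) * ((n:ℚ)+1) * 2^(n-1)) * ((dagCount (n+1) : ℚ)*(dagCount (n-1) : ℚ)) := by
    nlinarith [hstep]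
  have h3 : 2*((dagCount n : ℚ)*(dagCount n : ℚ)) ≤
      (dagCount (n+1) : ℚ)*(dagCount (n-1) : ℚ) := le_of_mul_le_mul_left h2 hK
  exact_mod_cast h3


end DagAux

theorem dagCount_ratio_eventually_doubling :
    ∀ᶠ n : ℕ in atTop,
      (dagCount (n + 1) : ℝ) / dagCount n ≥ 2 * (dagCount n : ℝ) / dagCount (n - 1) := by
  refine Filter.eventually_atTop.mpr ⟨100, fun n hn => ?_⟩
  have h := DagAux.dag_ineq hn
  have h' : 2 * dagCount n * dagCount n ≤ dagCount (n + 1) * dagCount (n - 1) := by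
    rw [mul_assoc]; exact h
  have hp1 : (0:ℝ) < dagCount n := by exact_mod_cast DagAux.dag_pos n
  have hp2 : (0:ℝ) < dagCount (n - 1) := by exact_mod_cast DagAux.dag_pos (n - 1)
  rw [ge_iff_le, div_le_div_iff₀ hp2 hp1]
  exact_mod_cast h'
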